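/- Let ω ∈ G(r,s,n) and let γ be an ordered labeled graph corresponding to a factorization of ω into reflections. Then ζ_r^{κ(w_1) + ⋯ + κ(w_n)} = φ(ω), where φ(ω) is the product of the nonzero entries of ω. Consequently, since each non-self edge contributes +k and −k to two different walks while each self-edge labeled k' contributes sk' to one walk, the labels k'_1,...,k'_{m_2} of the self-edges must satisfy ζ_{r/s}^{k'_1} ⋯ ζ_{r/s}^{k'_{m_2}} = φ(ω). -/

import Mathlib

def WreathZS (r n : ℕ) : Type := Equiv.Perm (Fin n) × (Fin n → ZMod r)
namespace WreathZS
variable {r n : ℕ}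
instance : Mul (WreathZS r n) :=
  ⟨fun x y => (x.1 * y.1, (fun i => x.2 (y.1 i)) + y.2)⟩
instance : One (WreathZS r n) := ⟨((1 : Equiv.Perm (Fin n)), 0)⟩
instance : Inv (WreathZS r n) :=
  ⟨fun x => (x.1⁻¹, fun i => -x.2 (x.1⁻¹ i))⟩
theorem mul_def (x y : WreathZS r n) :
    x * y = (x.1 * y.1, (fun i => x.2 (y.1 i)) + y.2) := rfl
theorem one_def : (1 : WreathZS r n) = ((1 : Equiv.Perm (Fin n)), 0) := rfl
instance : Group (WreathZS r n) where
  mul_assoc x y z := by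
    simp only [mul_def]
    refine Prod.ext (mul_assoc _ _ _) ?_
    funext i
    exact add_assoc _ _ _
  one_mul x := by
    simp only [mul_def, one_def]
    refine Prod.ext (one_mul _) ?_
    funext i; exact zero_add _
  mul_one x := by
    simp only [mul_def, one_def]
    refine Prod.ext (mul_one _) ?_
    funext i; exact add_zero _
  inv_mul_cancel x := by
    show (_, _) = (_, _)
    refine Prod.ext (inv_mul_cancel _) ?_
    funext i
    simp [Inv.inv]
end WreathZS

/-- The complex reflection group `G(r,s,n)`, modeled as the subgroup of the
wreath product `(ZMod r) ≀ Sₙ` of pairs `(σ, a)` such that `∑ i, a i` is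
divisible by `s` in `ZMod r`. -/
def Grsn (r s n : ℕ) : Subgroup (WreathZS r n) where
  carrier := {x | ∃ c : ZMod r, ∑ i, x.2 i = (s : ZMod r) * c}
  mul_mem' := by
    rintro x y ⟨c, hc⟩ ⟨d, hd⟩
    refine ⟨c + d, ?_⟩
    simp only [WreathZS.mul_def, Pi.add_apply]
    rw [Finset.sum_add_distrib, Equiv.sum_comp y.1 x.2, hc, hd, mul_add]
  one_mem' := ⟨0, by simp [WreathZS.one_def]⟩
  inv_mem' := by
    rintro x ⟨c, hc⟩
    refine ⟨-c, ?_⟩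
    show ∑ i, -x.2 (x.1⁻¹ i) = _
    rw [show (∑ i, -x.2 (x.1⁻¹ i)) = ∑ i, (fun j => -x.2 j) (x.1⁻¹ i) from rfl,
      Equiv.sum_comp x.1⁻¹ (fun j => -x.2 j), Finset.sum_neg_distrib, hc]
    ring

/-- `walkEndWt s L v` returns the endpoint and the signed weight `κ` of the
sequential ordered edge walk starting at `v` in the labeled graph `L`: each
traversed non-self edge labeled `k` contributes `+k` if traversed towards the
larger-indexed vertex (an up-step) and `-k` towards the smaller (a down-step),
while a self-edge labeled `k` contributes `s·k` (a loop). -/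
def walkEndWt {n : ℕ} (s : ℕ) : List (Sym2 (Fin n) × ℤ) → Fin n → Fin n × ℤ
  | [], v => (v, 0)
  | (e, k) :: rest, v =>
    if h : v ∈ e then
      let u := Sym2.Mem.other' h
      let w := walkEndWt s rest u
      (w.1, (if u = v then (s : ℤ) * k else if v < u then k else -k) + w.2)
    else walkEndWt s rest v

/-- The reflection of `G(r,s,n)` (in the `(σ, a)` wreath model) associated to a
labeled edge: an edge `{i,j}` with `i < j` labeled `k` gives the reflection
`σ_{ij}^{k/r}` (the pair `(swap i j, a)` with `a i = k`, `a j = -k`), and a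
self-edge `{i,i}` labeled `k` gives `τ_i^{sk/r}` (the pair `(1, a)` with
`a i = s·k`). -/
def reflOf (r s n : ℕ) (ek : Sym2 (Fin n) × ℤ) : WreathZS r n :=
  Sym2.lift
    ⟨fun i j =>
      if i = j then ((1 : Equiv.Perm (Fin n)),
        fun l => if l = i then ((s : ℤ) * ek.2 : ℤ) else 0)
      else (Equiv.swap i j,
        fun l => if l = min i j then ((ek.2 : ℤ) : ZMod r)
          else if l = max i j then (-ek.2 : ℤ) else 0),
      by
        intro a b
        by_cases h : a = b
        · subst h; simp; rfl
        · simp only [h, Ne.symm h, if_false]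
          rw [Equiv.swap_comm, min_comm, max_comm]
          exact (if_neg not_false).trans (if_neg not_false).symm⟩
    ek.1


section Aux

lemma aux_min_ne_max {α : Type*} [LinearOrder α] {a b : α} (h : a ≠ b) :
    min a b ≠ max a b := by
  intro hh
  rcases le_total a b with h' | h'
  · rw [min_eq_left h', max_eq_right h'] at hh; exact h hh
  · rw [min_eq_right h', max_eq_left h'] at hh; exact h hh.symm

lemma aux_sum_snd_mul {r n : ℕ} (x y : WreathZS r n) :
    ∑ i, (x * y).2 i = ∑ i, x.2 i + ∑ i, y.2 i := by
  simp only [WreathZS.mul_def, Pi.add_apply]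
  rw [Finset.sum_add_distrib, Equiv.sum_comp y.1 x.2]

lemma aux_sum_reflOf (r s n : ℕ) (e : Sym2 (Fin n)) (k : ℤ) :
    ∑ i, (reflOf r s n (e, k)).2 i
      = if e.IsDiag then (((s : ℤ) * k : ℤ) : ZMod r) else 0 := by
  induction e using Sym2.inductionOn with
  | _ a b =>
    by_cases hab : a = b
    · subst hab
      simp only [reflOf, Sym2.lift_mk, if_pos rfl, Sym2.mk_isDiag_iff, if_true]
      show ∑ x : Fin n, (if x = a then (((s : ℤ) * k : ℤ) : ZMod r) else 0) = _
      rw [Finset.sum_ite_eq' Finset.univ a fun _ => (((s : ℤ) * k : ℤ) : ZMod r)]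
      simp
    · have hmm : min a b ≠ max a b := aux_min_ne_max hab
      simp only [reflOf, Sym2.lift_mk, if_neg hab, Sym2.mk_isDiag_iff, hab, if_false]
      show ∑ x : Fin n, (if x = min a b then ((k : ℤ) : ZMod r)
            else if x = max a b then ((-k : ℤ) : ZMod r) else 0) = _
      have hfun : ∀ l : Fin n,
          (if l = min a b then ((k : ℤ) : ZMod r)
            else if l = max a b then ((-k : ℤ) : ZMod r) else 0)
          = (if l = min a b then ((k : ℤ) : ZMod r) else 0)
            + (if l = max a b then ((-k : ℤ) : ZMod r) else 0) := by
        intro l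
        by_cases h1 : l = min a b
        · subst h1; simp [hmm]
        · simp [h1]
      rw [Finset.sum_congr rfl fun l _ => hfun l, Finset.sum_add_distrib,
        Finset.sum_ite_eq' Finset.univ (min a b) fun _ => ((k : ℤ) : ZMod r),
        Finset.sum_ite_eq' Finset.univ (max a b) fun _ => ((-k : ℤ) : ZMod r)]
      simp

lemma aux_prod_sum (r s n : ℕ) (L : List (Sym2 (Fin n) × ℤ)) :
    ∑ i, (L.map (reflOf r s n)).reverse.prod.2 i
      = (((s : ℤ) * ((L.filter fun ek => ek.1.IsDiag).map Prod.snd).sum : ℤ) : ZMod r) := by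
  induction L with
  | nil => simp [WreathZS.one_def]
  | cons ek L ih =>
    obtain ⟨e, k⟩ := ek
    rw [List.map_cons, List.reverse_cons, List.prod_append, List.prod_singleton,
      aux_sum_snd_mul, ih, aux_sum_reflOf]
    by_cases he : e.IsDiag
    · simp only [List.filter_cons, he, decide_true, if_true, List.map_cons,
        List.sum_cons, if_pos he]
      push_cast
      ring
    · simp only [List.filter_cons, he, decide_false, if_false, if_neg he,
        Bool.false_eq_true]
      ring

lemma aux_walk_sum {n : ℕ} (s : ℕ) (L : List (Sym2 (Fin n) × ℤ)) :
    ∑ i, (walkEndWt s L i).2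
      = (s : ℤ) * ((L.filter fun ek => ek.1.IsDiag).map Prod.snd).sum := by
  induction L with
  | nil => simp [walkEndWt]
  | cons ek L ih =>
    obtain ⟨e, k⟩ := ek
    induction e using Sym2.inductionOn with
    | _ a b =>
      by_cases hab : a = b
      · subst hab
        have hpt : ∀ i, (walkEndWt s ((s(a, a), k) :: L) i).2
            = (if i = a then (s : ℤ) * k else 0) + (walkEndWt s L i).2 := by
          intro i
          by_cases hi : i ∈ (s(a, a) : Sym2 (Fin n))
          · have hia : i = a := by
              rcases Sym2.mem_iff.mp hi with h | h <;> exact h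
            subst hia
            have hoth : Sym2.Mem.other' hi = i := by
              have := Sym2.other_spec' hi
              rwa [Sym2.congr_right] at this
            simp [walkEndWt, hi, hoth]
          · have hia : i ≠ a := by
              intro h; exact hi (by rw [h]; exact Sym2.mem_mk_left a a)
            simp [walkEndWt, hi, hia]
        rw [Finset.sum_congr rfl fun i _ => hpt i, Finset.sum_add_distrib,
          Finset.sum_ite_eq' Finset.univ a fun _ => (s : ℤ) * k, ih]
        simp only [List.filter_cons, Sym2.mk_isDiag_iff, decide_true, if_true,
          List.map_cons, List.sum_cons]
        simp
        ring
      · have hpt : ∀ i, (walkEndWt s ((s(a, b), k) :: L) i).2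
            = ((if i = a then (if a < b then k else -k) else 0)
              + (if i = b then (if b < a then k else -k) else 0))
              + (walkEndWt s L (Equiv.swap a b i)).2 := by
          intro i
          by_cases hia : i = a
          · subst hia
            have hi : i ∈ (s(i, b) : Sym2 (Fin n)) := Sym2.mem_mk_left i b
            have hoth : Sym2.Mem.other' hi = b := by
              have := Sym2.other_spec' hi
              rwa [Sym2.congr_right] at this
            have hba : ¬ (b = i) := fun h => hab h.symm
            simp [walkEndWt, hi, hoth, hba, hab, Equiv.swap_apply_left]
          · by_cases hib : i = b
            · subst hib
              have hi : i ∈ (s(a, i) : Sym2 (Fin n)) := Sym2.mem_mk_right a i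
              have hoth : Sym2.Mem.other' hi = a := by
                have h1 := Sym2.other_spec' hi
                have h2 : s(i, Sym2.Mem.other' hi) = s(i, a) :=
                  h1.trans (Sym2.eq_swap)
                rwa [Sym2.congr_right] at h2
              have hai : ¬ (a = i) := hab
              simp [walkEndWt, hi, hoth, hai, hia, Equiv.swap_apply_right]
            · have hi : i ∉ (s(a, b) : Sym2 (Fin n)) := by
                intro h
                rcases Sym2.mem_iff.mp h with h | h
                · exact hia h
                · exact hib h
              simp [walkEndWt, hi, hia, hib, Equiv.swap_apply_of_ne_of_ne hia hib]
        rw [Finset.sum_congr rfl fun i _ => hpt i, Finset.sum_add_distrib,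
          Finset.sum_add_distrib,
          Finset.sum_ite_eq' Finset.univ a fun _ => (if a < b then k else -k),
          Finset.sum_ite_eq' Finset.univ b fun _ => (if b < a then k else -k),
          Equiv.sum_comp (Equiv.swap a b) (fun i => (walkEndWt s L i).2), ih]
        have hcontrib : (if a < b then k else -k) + (if b < a then k else -k) = 0 := by
          rcases lt_or_gt_of_ne hab with h | h
          · simp [h, not_lt_of_gt h]
          · simp [h, not_lt_of_gt h]
        simp only [List.filter_cons, Sym2.mk_isDiag_iff, hab, decide_false, if_false,
          Finset.mem_univ, if_true, Bool.false_eq_true]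
        rw [hcontrib]
        ring

end Aux

/-- (Equation (3.4)/(3.5) of the paper.) If the ordered labeled graph `L`
encodes a factorization of `ω ∈ G(r,s,n)` into reflections, then
`ζ_r^{κ(w_1) + ⋯ + κ(w_n)} = φ(ω)`, the product of the nonzero entries of `ω`
(in the `(σ, a)` model, `∑ i, κ(w_i) ≡ ∑ i, a i (mod r)`); consequently the
self-edge labels `k'_1, …, k'_{m₂}` satisfy
`ζ_{r/s}^{k'_1} ⋯ ζ_{r/s}^{k'_{m₂}} = φ(ω)`, i.e.
`s·(k'_1 + ⋯ + k'_{m₂}) ≡ ∑ i, a i (mod r)`. -/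
theorem factorization_graph_weight_sum (r s n : ℕ) (hr : 0 < r) (hs : 0 < s)
    (hsr : s ∣ r) (L : List (Sym2 (Fin n) × ℤ))
    (hlab : ∀ ek ∈ L,
      (ek.1.IsDiag → 0 < ek.2 ∧ ek.2 < ((r / s : ℕ) : ℤ)) ∧
      (¬ ek.1.IsDiag → 0 ≤ ek.2 ∧ ek.2 < (r : ℤ))) :
    (((∑ i, (walkEndWt s L i).2 : ℤ) : ZMod r)
        = ∑ i, (L.map (reflOf r s n)).reverse.prod.2 i) ∧
    ((((s : ℤ) * ((L.filter fun ek => ek.1.IsDiag).map Prod.snd).sum : ℤ) : ZMod r)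
        = ∑ i, (L.map (reflOf r s n)).reverse.prod.2 i) := by
  exact ⟨by rw [aux_walk_sum s L]; exact (aux_prod_sum r s n L).symm,
    (aux_prod_sum r s n L).symm⟩
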